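/- arXiv:2601.17306 — 3 statements merged into one kernel-verified Lean document; each statement's English description precedes it below -/
import Mathlib

section
/- Let t > 0 and let h₀ : ℝ² → [0,∞) be measurable such that ∫_{ℝ²} (1+‖y‖) h₀(y) g_t(z−y) dy < ∞ for every z ∈ ℝ². Then the function x ↦ ∫_{ℝ²} h₀(y) g_t(x−y) dy is differentiable on ℝ², and for every x ∈ ℝ² the ℝ²-valued identity ∫_{ℝ²} y · h₀(y) · g_t(x−y) dy = (∫_{ℝ²} h₀(y) g_t(x−y) dy) · x + t · ∇_x (∫_{ℝ²} h₀(y) g_t(x−y) dy) holds, where ∇_x denotes the gradient in x. -/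
open MeasureTheory Real

noncomputable section

/-- The plane `ℝ²`. -/
abbrev E2 := EuclideanSpace ℝ (Fin 2)

/-- The two-dimensional Gaussian heat kernel `g_t(x) = (2πt)⁻¹ exp(−‖x‖²/(2t))`. -/
def gauss (t : ℝ) (x : E2) : ℝ := (2 * π * t)⁻¹ * Real.exp (-‖x‖ ^ 2 / (2 * t))

lemma gauss_nonneg {t : ℝ} (ht : 0 < t) (x : E2) : 0 ≤ gauss t x := by
  unfold gauss; positivity

lemma gauss_continuous (t : ℝ) : Continuous (gauss t) := by
  unfold gauss; fun_prop

section Aux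
variable {t : ℝ} {h₀ : E2 → ℝ}

lemma integrand_meas (hmeas : Measurable h₀) (x : E2) :
    AEStronglyMeasurable (fun y : E2 => h₀ y * gauss t (x - y)) volume :=
  (hmeas.mul (((gauss_continuous t).comp
    (continuous_const.sub continuous_id)).measurable)).aestronglyMeasurable

lemma integrable_conv (ht : 0 < t) (hmeas : Measurable h₀) (hnn : ∀ y : E2, 0 ≤ h₀ y)
    (hint : ∀ z : E2, Integrable (fun y : E2 => (1 + ‖y‖) * h₀ y * gauss t (z - y)))
    (x : E2) : Integrable (fun y : E2 => h₀ y * gauss t (x - y)) := by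
  refine (hint x).mono (integrand_meas hmeas x) (Filter.Eventually.of_forall fun y => ?_)
  have g := gauss_nonneg ht (x - y)
  have h := hnn y
  have hy := norm_nonneg y
  rw [Real.norm_eq_abs, Real.norm_eq_abs, abs_of_nonneg (by positivity),
    abs_of_nonneg (by positivity)]
  nlinarith [mul_nonneg (mul_nonneg hy h) g]

lemma integrable_conv_y (ht : 0 < t) (hmeas : Measurable h₀) (hnn : ∀ y : E2, 0 ≤ h₀ y)
    (hint : ∀ z : E2, Integrable (fun y : E2 => (1 + ‖y‖) * h₀ y * gauss t (z - y)))
    (x : E2) :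
    Integrable (fun y : E2 => (h₀ y * gauss t (x - y)) • y) := by
  refine (hint x).mono
    (((integrand_meas hmeas x)).smul aestronglyMeasurable_id)
    (Filter.Eventually.of_forall fun y => ?_)
  have g := gauss_nonneg ht (x - y)
  have h := hnn y
  have hy := norm_nonneg y
  rw [norm_smul, Real.norm_eq_abs, Real.norm_eq_abs, abs_of_nonneg (by positivity),
    abs_of_nonneg (by positivity)]
  nlinarith [mul_nonneg (mul_nonneg hy h) g, mul_nonneg h g]

end Aux

lemma gauss_hasFDerivAt (t : ℝ) (ht : 0 < t) (y x : E2) :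
    HasFDerivAt (fun x : E2 => gauss t (x - y))
      ((-(gauss t (x - y) / t)) • innerSL ℝ (x - y)) x := by
  have h1 : HasFDerivAt (fun x : E2 => x - y) (ContinuousLinearMap.id ℝ E2) x :=
    (hasFDerivAt_id x).sub_const y
  have h2 : HasFDerivAt (fun x : E2 => ‖x - y‖ ^ 2) ((2:ℝ) • innerSL ℝ (x - y)) x := by
    refine h1.norm_sq.congr_fderiv ?_
    ext v
    simp [two_smul]
  have h3 := (h2.const_mul (-(2*t)⁻¹)).exp.const_mul ((2 * π * t)⁻¹)
  have hfun : (fun x : E2 => (2 * π * t)⁻¹ * Real.exp (-(2*t)⁻¹ * ‖x - y‖ ^ 2))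
      = fun x : E2 => gauss t (x - y) := by
    funext z
    unfold gauss
    congr 1
    rw [neg_div, div_eq_inv_mul, neg_mul]
  rw [hfun] at h3
  refine h3.congr_fderiv (Eq.symm ?_)
  ext v
  simp only [ContinuousLinearMap.smul_apply, ContinuousLinearMap.coe_smul', Pi.smul_apply,
    smul_eq_mul, gauss]
  ring

/-- one of the four centers `x₀ ± 2 e_j` is good -/
lemma exists_center (x₀ y : E2) : ∃ c : E2,
    (c = x₀ + EuclideanSpace.single 0 (2:ℝ) ∨ c = x₀ + EuclideanSpace.single 0 (-2:ℝ) ∨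
     c = x₀ + EuclideanSpace.single 1 (2:ℝ) ∨ c = x₀ + EuclideanSpace.single 1 (-2:ℝ)) ∧
    ∃ m : ℝ, 0 ≤ m ∧ ‖x₀ - y‖ ^ 2 ≤ 2 * m ^ 2 ∧ ‖c - y‖ ^ 2 = ‖x₀ - y‖ ^ 2 + 4 - 4 * m := by
  set v : E2 := y - x₀ with hv
  have hnorm : ‖x₀ - y‖ = ‖v‖ := by rw [hv, norm_sub_rev]
  have hv2 : ‖v‖ ^ 2 = (v 0) ^ 2 + (v 1) ^ 2 := by
    rw [EuclideanSpace.norm_eq, Real.sq_sqrt (by positivity)]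
    simp [Fin.sum_univ_two, Real.norm_eq_abs, sq_abs]
  have key : ∀ (j : Fin 2) (a : ℝ), ‖(x₀ + EuclideanSpace.single j a) - y‖ ^ 2
      = a ^ 2 - 2 * (a * v j) + ‖v‖ ^ 2 := by
    intro j a
    have : (x₀ + EuclideanSpace.single j a) - y = EuclideanSpace.single j a - v := by
      rw [hv]; abel
    rw [this, norm_sub_sq_real, EuclideanSpace.norm_single, EuclideanSpace.inner_single_left]
    simp [Real.norm_eq_abs, sq_abs]
  rcases le_total |v 1| |v 0| with hmax | hmax
  · refine ⟨x₀ + EuclideanSpace.single 0 (if 0 ≤ v 0 then (2:ℝ) else -2), ?_, |v 0|, abs_nonneg _, ?_, ?_⟩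
    · by_cases h : 0 ≤ v 0 <;> simp [h]
    · rw [hnorm, hv2]
      have h0 : (v 1)^2 ≤ (v 0)^2 := by rw [← sq_abs (v 0), ← sq_abs (v 1)]; exact pow_le_pow_left₀ (abs_nonneg _) hmax 2
      rw [sq_abs]; linarith
    · rw [key, hnorm]
      by_cases h : 0 ≤ v 0
      · rw [if_pos h, abs_of_nonneg h]; ring
      · rw [if_neg h, abs_of_neg (not_le.mp h)]; ring
  · refine ⟨x₀ + EuclideanSpace.single 1 (if 0 ≤ v 1 then (2:ℝ) else -2), ?_, |v 1|, abs_nonneg _, ?_, ?_⟩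
    · by_cases h : 0 ≤ v 1 <;> simp [h]
    · rw [hnorm, hv2]
      have h0 : (v 0)^2 ≤ (v 1)^2 := by rw [← sq_abs (v 0), ← sq_abs (v 1)]; exact pow_le_pow_left₀ (abs_nonneg _) hmax 2
      rw [sq_abs]; linarith
    · rw [key, hnorm]
      by_cases h : 0 ≤ v 1
      · rw [if_pos h, abs_of_nonneg h]; ring
      · rw [if_neg h, abs_of_neg (not_le.mp h)]; ring

/-- comparison of shifted gaussians -/
lemma gauss_cmp {t : ℝ} (ht : 0 < t) (x₀ x y : E2) (hx : ‖x - x₀‖ ≤ 1) :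
    gauss t (x - y) ≤ Real.exp (3 / t) *
      (gauss t ((x₀ + EuclideanSpace.single 0 (2:ℝ)) - y)
        + gauss t ((x₀ + EuclideanSpace.single 0 (-2:ℝ)) - y)
        + gauss t ((x₀ + EuclideanSpace.single 1 (2:ℝ)) - y)
        + gauss t ((x₀ + EuclideanSpace.single 1 (-2:ℝ)) - y)) := by
  obtain ⟨c, hc, m, hm0, hm2, hcy⟩ := exists_center x₀ y
  -- ‖c - y‖^2 ≤ ‖x - y‖^2 + 6
  have hr : |‖x₀ - y‖ - ‖x - y‖| ≤ 1 := by
    calc |‖x₀ - y‖ - ‖x - y‖| ≤ ‖(x₀ - y) - (x - y)‖ := abs_norm_sub_norm_le _ _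
    _ = ‖x - x₀‖ := by rw [show (x₀ - y) - (x - y) = -(x - x₀) by abel, norm_neg]
    _ ≤ 1 := hx
  rw [abs_le] at hr
  have hrm : ‖x₀ - y‖ ≤ 2 * m := by
    nlinarith [norm_nonneg (x₀ - y), sq_nonneg (‖x₀ - y‖ - 2*m)]
  have h6 : ‖c - y‖ ^ 2 ≤ ‖x - y‖ ^ 2 + 6 := by
    have h1 : ‖x₀ - y‖ ^ 2 - ‖x - y‖ ^ 2 ≤ ‖x₀ - y‖ + ‖x - y‖ := by
      nlinarith [norm_nonneg (x₀ - y), norm_nonneg (x - y)]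
    nlinarith [norm_nonneg (x - y)]
  -- gauss t (x - y) ≤ exp (3/t) * gauss t (c - y)
  have hmain : gauss t (x - y) ≤ Real.exp (3 / t) * gauss t (c - y) := by
    unfold gauss
    have h2t : (0:ℝ) < 2 * t := by linarith
    have hrw : Real.exp (3/t) * ((2 * π * t)⁻¹ * Real.exp (-‖c - y‖ ^ 2 / (2 * t)))
        = (2 * π * t)⁻¹ * Real.exp (3/t + -‖c - y‖ ^ 2 / (2 * t)) := by
      rw [Real.exp_add]; ring
    rw [hrw]
    apply mul_le_mul_of_nonneg_left _ (by positivity)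
    apply Real.exp_le_exp.mpr
    have heq : 3 / t + -‖c - y‖ ^ 2 / (2 * t) - (-‖x - y‖ ^ 2 / (2 * t))
        = (6 + ‖x - y‖ ^ 2 - ‖c - y‖ ^ 2) / (2 * t) := by field_simp; ring
    have hpos : 0 ≤ (6 + ‖x - y‖ ^ 2 - ‖c - y‖ ^ 2) / (2 * t) :=
      div_nonneg (by linarith) h2t.le
    linarith [heq ▸ hpos]
  refine hmain.trans (mul_le_mul_of_nonneg_left ?_ (Real.exp_nonneg _))
  have g1 := gauss_nonneg ht ((x₀ + EuclideanSpace.single 0 (2:ℝ)) - y)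
  have g2 := gauss_nonneg ht ((x₀ + EuclideanSpace.single 0 (-2:ℝ)) - y)
  have g3 := gauss_nonneg ht ((x₀ + EuclideanSpace.single 1 (2:ℝ)) - y)
  have g4 := gauss_nonneg ht ((x₀ + EuclideanSpace.single 1 (-2:ℝ)) - y)
  rcases hc with h | h | h | h <;> rw [h] <;> linarith

lemma key_hasGradientAt {t : ℝ} {h₀ : E2 → ℝ} (ht : 0 < t) (hmeas : Measurable h₀)
    (hnn : ∀ y : E2, 0 ≤ h₀ y)
    (hint : ∀ z : E2, Integrable (fun y : E2 => (1 + ‖y‖) * h₀ y * gauss t (z - y)))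
    (x₀ : E2) :
    HasGradientAt (fun x : E2 => ∫ y : E2, h₀ y * gauss t (x - y))
      (t⁻¹ • ∫ y : E2, (h₀ y * gauss t (x₀ - y)) • (y - x₀)) x₀ := by
  set F' : E2 → E2 → (E2 →L[ℝ] ℝ) :=
    fun x y => (-(h₀ y * gauss t (x - y) / t)) • innerSL ℝ (x - y) with hF'
  have hderiv : HasFDerivAt (fun x : E2 => ∫ y : E2, h₀ y * gauss t (x - y))
      (∫ y : E2, F' x₀ y) x₀ := by
    apply hasFDerivAt_integral_of_dominated_of_fderiv_le (s := Metric.ball x₀ 1)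
      (bound := fun y : E2 => (Real.exp (3 / t) * (1 + ‖x₀‖) / t) *
        ((1 + ‖y‖) * h₀ y *
          (gauss t ((x₀ + EuclideanSpace.single 0 (2:ℝ)) - y)
            + gauss t ((x₀ + EuclideanSpace.single 0 (-2:ℝ)) - y)
            + gauss t ((x₀ + EuclideanSpace.single 1 (2:ℝ)) - y)
            + gauss t ((x₀ + EuclideanSpace.single 1 (-2:ℝ)) - y)))) (Metric.ball_mem_nhds x₀ one_pos)
    · exact Filter.Eventually.of_forall fun x => integrand_meas hmeas x
    · exact integrable_conv ht hmeas hnn hint x₀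
    · have hgm : Measurable (fun y : E2 => gauss t (x₀ - y)) :=
        ((gauss_continuous t).comp (continuous_const.sub continuous_id)).measurable
      have hsc : Measurable (fun y : E2 => -(h₀ y * gauss t (x₀ - y) / t)) :=
        ((hmeas.mul hgm).div_const t).neg
      exact hsc.aestronglyMeasurable.smul
        (((innerSL ℝ).continuous.comp (continuous_const.sub continuous_id)).aestronglyMeasurable)
    · refine Filter.Eventually.of_forall fun y => fun x hx => ?_
      have hx1 : ‖x - x₀‖ ≤ 1 := by
        rw [Metric.mem_ball, dist_eq_norm] at hx; exact hx.le
      have hnrm : ‖F' x y‖ = (h₀ y * gauss t (x - y) / t) * ‖x - y‖ := by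
        simp only [hF']
        rw [norm_smul _ (innerSL ℝ (x - y)), innerSL_apply_norm, Real.norm_eq_abs, abs_neg,
          abs_of_nonneg (div_nonneg (mul_nonneg (hnn y) (gauss_nonneg ht _)) ht.le)]
      have hxy : ‖x - y‖ ≤ (1 + ‖x₀‖) * (1 + ‖y‖) := by
        have he : x - y = (x - x₀) + (x₀ - y) := by abel
        have h2 := norm_sub_le x₀ y
        have h3 := norm_nonneg x₀
        have h4 := norm_nonneg y
        calc ‖x - y‖ = ‖(x - x₀) + (x₀ - y)‖ := by rw [← he]
          _ ≤ ‖x - x₀‖ + ‖x₀ - y‖ := norm_add_le _ _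
          _ ≤ (1 + ‖x₀‖) * (1 + ‖y‖) := by nlinarith
      have hg := gauss_cmp ht x₀ x y hx1
      have hS : 0 ≤ gauss t ((x₀ + EuclideanSpace.single 0 (2:ℝ)) - y)
            + gauss t ((x₀ + EuclideanSpace.single 0 (-2:ℝ)) - y)
            + gauss t ((x₀ + EuclideanSpace.single 1 (2:ℝ)) - y)
            + gauss t ((x₀ + EuclideanSpace.single 1 (-2:ℝ)) - y) := by
        have g1 := gauss_nonneg ht ((x₀ + EuclideanSpace.single 0 (2:ℝ)) - y)
        have g2 := gauss_nonneg ht ((x₀ + EuclideanSpace.single 0 (-2:ℝ)) - y)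
        have g3 := gauss_nonneg ht ((x₀ + EuclideanSpace.single 1 (2:ℝ)) - y)
        have g4 := gauss_nonneg ht ((x₀ + EuclideanSpace.single 1 (-2:ℝ)) - y)
        linarith
      have hh := hnn y
      calc ‖F' x y‖ = (h₀ y / t) * (‖x - y‖ * gauss t (x - y)) := by rw [hnrm]; ring
        _ ≤ (h₀ y / t) * (((1 + ‖x₀‖) * (1 + ‖y‖)) *
            (Real.exp (3 / t) * (gauss t ((x₀ + EuclideanSpace.single 0 (2:ℝ)) - y)
              + gauss t ((x₀ + EuclideanSpace.single 0 (-2:ℝ)) - y)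
              + gauss t ((x₀ + EuclideanSpace.single 1 (2:ℝ)) - y)
              + gauss t ((x₀ + EuclideanSpace.single 1 (-2:ℝ)) - y)))) := by
            apply mul_le_mul_of_nonneg_left _ (div_nonneg hh ht.le)
            exact mul_le_mul hxy hg (gauss_nonneg ht _) (by positivity)
        _ = _ := by ring
    · have hrw : (fun y : E2 => (Real.exp (3 / t) * (1 + ‖x₀‖) / t) *
        ((1 + ‖y‖) * h₀ y *
          (gauss t ((x₀ + EuclideanSpace.single 0 (2:ℝ)) - y)
            + gauss t ((x₀ + EuclideanSpace.single 0 (-2:ℝ)) - y)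
            + gauss t ((x₀ + EuclideanSpace.single 1 (2:ℝ)) - y)
            + gauss t ((x₀ + EuclideanSpace.single 1 (-2:ℝ)) - y))))
          = fun y : E2 => (Real.exp (3 / t) * (1 + ‖x₀‖) / t) *
            ((1 + ‖y‖) * h₀ y * gauss t ((x₀ + EuclideanSpace.single 0 (2:ℝ)) - y)
            + (1 + ‖y‖) * h₀ y * gauss t ((x₀ + EuclideanSpace.single 0 (-2:ℝ)) - y)
            + (1 + ‖y‖) * h₀ y * gauss t ((x₀ + EuclideanSpace.single 1 (2:ℝ)) - y)
            + (1 + ‖y‖) * h₀ y * gauss t ((x₀ + EuclideanSpace.single 1 (-2:ℝ)) - y)) := by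
        funext y; ring
      rw [hrw]
      exact ((((hint _).add (hint _)).add (hint _)).add (hint _)).const_mul _
    · refine Filter.Eventually.of_forall fun y => fun x _ => ?_
      have := (gauss_hasFDerivAt t ht y x).const_mul (h₀ y)
      refine this.congr_fderiv (Eq.symm ?_)
      rw [hF', smul_smul]
      congr 1
      ring
  -- convert the Fréchet derivative statement to a gradient statement
  rw [hasGradientAt_iff_hasFDerivAt]
  have hIntV : Integrable (fun y : E2 => (h₀ y * gauss t (x₀ - y)) • (y - x₀)) := by
    have h1 := integrable_conv_y ht hmeas hnn hint x₀
    have h2 := (integrable_conv ht hmeas hnn hint x₀).smul_const x₀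
    have hrw : (fun y : E2 => (h₀ y * gauss t (x₀ - y)) • (y - x₀))
        = fun y : E2 => (h₀ y * gauss t (x₀ - y)) • y - (h₀ y * gauss t (x₀ - y)) • x₀ :=
      funext fun y => smul_sub _ _ _
    rw [hrw]; exact h1.sub h2
  have e1 : ∀ y : E2, F' x₀ y
      = innerSL ℝ (t⁻¹ • ((h₀ y * gauss t (x₀ - y)) • (y - x₀))) := by
    intro y
    ext v
    rw [hF']
    simp only [ContinuousLinearMap.smul_apply, innerSL_apply_apply, smul_eq_mul,
      real_inner_smul_left, inner_sub_left]
    ring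
  have hcomm : ∫ y : E2, F' x₀ y
      = innerSL ℝ (t⁻¹ • ∫ y : E2, (h₀ y * gauss t (x₀ - y)) • (y - x₀)) := by
    have hIntG : Integrable (fun y : E2 => t⁻¹ • ((h₀ y * gauss t (x₀ - y)) • (y - x₀))) :=
      hIntV.smul t⁻¹
    simp_rw [e1]
    rw [ContinuousLinearMap.integral_comp_comm (innerSL ℝ) hIntG, integral_smul]
  have htd : InnerProductSpace.toDual ℝ E2
      (t⁻¹ • ∫ y : E2, (h₀ y * gauss t (x₀ - y)) • (y - x₀))
      = innerSL ℝ (t⁻¹ • ∫ y : E2, (h₀ y * gauss t (x₀ - y)) • (y - x₀)) := by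
    ext v; simp [InnerProductSpace.toDual_apply_apply]
  rw [htd, ← hcomm]
  exact hderiv

/-- For a nonnegative measurable `h₀` with a first-moment integrability
condition against the heat kernel, the convolution `x ↦ (h₀ * g_t)(x)` is differentiable
and the vector-valued identity `(ĥ₀ * g_t)(x) = (h₀ * g_t)(x) · x + t · ∇(h₀ * g_t)(x)`
holds, where `ĥ₀(y) = y h₀(y)`. -/
theorem hat_convolution_identity
    (t : ℝ) (ht : 0 < t) (h₀ : E2 → ℝ)
    (hmeas : Measurable h₀) (hnn : ∀ y : E2, 0 ≤ h₀ y)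
    (hint : ∀ z : E2, Integrable (fun y : E2 => (1 + ‖y‖) * h₀ y * gauss t (z - y))) :
    Differentiable ℝ (fun x : E2 => ∫ y : E2, h₀ y * gauss t (x - y)) ∧
    ∀ x : E2,
      (∫ y : E2, (h₀ y * gauss t (x - y)) • y)
        = (∫ y : E2, h₀ y * gauss t (x - y)) • x
          + t • gradient (fun x' : E2 => ∫ y : E2, h₀ y * gauss t (x' - y)) x := by
  constructor
  · exact fun x => (key_hasGradientAt ht hmeas hnn hint x).differentiableAt
  · intro x
    have hg := (key_hasGradientAt ht hmeas hnn hint x).gradient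
    rw [hg, smul_smul, mul_inv_cancel₀ (ne_of_gt ht), one_smul]
    have hsplit : ∫ y : E2, (h₀ y * gauss t (x - y)) • (y - x)
        = (∫ y : E2, (h₀ y * gauss t (x - y)) • y)
          - (∫ y : E2, h₀ y * gauss t (x - y)) • x := by
      have hrw : (fun y : E2 => (h₀ y * gauss t (x - y)) • (y - x))
          = fun y : E2 => (h₀ y * gauss t (x - y)) • y - (h₀ y * gauss t (x - y)) • x :=
        funext fun y => smul_sub _ _ _
      rw [hrw, integral_sub (integrable_conv_y ht hmeas hnn hint x)
        ((integrable_conv ht hmeas hnn hint x).smul_const x), integral_smul_const]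
    rw [hsplit]
    abel
end
end

section
/- Let x ∈ ℝ² ∖ {0}, t ∈ ℝ, b ∈ ℝ², and λ, λ⊥ ∈ ℝ. Let H : ℝ × ℝ² → ℝ² be C¹ in the time variable and C² in the space variable in a neighborhood of (t,x), and let G : ℝ² → ℝ be C². Set x̂ := x/‖x‖ and let x̂⊥ be the rotation of x̂ by 90°. Assume that the spatial Jacobian of H at (t,x) equals λ P_x + λ⊥ (I − P_x), where P_x is the orthogonal projection onto span{x}, and that H satisfies ∂_t H(t,x) = (1/2) Δ_x H(t,x) + (D_x H(t,x)) b (componentwise, with Δ_x the spatial Laplacian). Then (1/2) Δ_x (G∘H)(t,x) + b · ∇_x (G∘H)(t,x) − ∂_t (G∘H)(t,x) = (1/2) [ λ² ⟨x̂, Hess G(z) x̂⟩ + (λ⊥)² ⟨x̂⊥, Hess G(z) x̂⊥⟩ ] evaluated at z = H(t,x), where Hess G(z) is the Hessian of G at z. -/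
noncomputable section
open scoped Topology

/-- The orthogonal projection of `ℝ²` onto the line spanned by `x`,
`P_x v = (⟨x,v⟩/‖x‖²) • x`, as a continuous linear map. -/
def projLine (x : E2) : E2 →L[ℝ] E2 :=
  (‖x‖ ^ 2 : ℝ)⁻¹ • ((innerSL ℝ x).smulRight x)

/-- The spatial Laplacian, i.e. the sum of the two pure second partial derivatives
(componentwise for vector-valued maps). -/
def lap {F : Type*} [NormedAddCommGroup F] [NormedSpace ℝ F] (f : E2 → F) (x : E2) : F :=
  ∑ i : Fin 2,
    fderiv ℝ (fun y : E2 => fderiv ℝ f y (EuclideanSpace.single i 1)) x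
      (EuclideanSpace.single i 1)

/-- The second directional derivative `⟨v, Hess G(z) v⟩` of a scalar function `G` at `z`
in direction `v`. -/
def hessQuad (G : E2 → ℝ) (z v : E2) : ℝ :=
  fderiv ℝ (fun w : E2 => fderiv ℝ G w v) z v

/-- The unit vector `x̂ = x/‖x‖`. -/
def xhat (x : E2) : E2 := ‖x‖⁻¹ • x

/-- The rotation of `x̂` by 90°. -/
def xhatPerp (x : E2) : E2 :=
  EuclideanSpace.single 0 (-(xhat x 1)) + EuclideanSpace.single 1 (xhat x 0)

private lemma e2_decomp (u : E2) :
    u = u 0 • EuclideanSpace.single 0 1 + u 1 • EuclideanSpace.single 1 1 := by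
  ext i
  fin_cases i <;> simp [EuclideanSpace.single_apply]

private lemma bilin_expand (B : E2 →L[ℝ] E2 →L[ℝ] ℝ) (u v : E2) :
    B u v = u 0 * v 0 * B (EuclideanSpace.single 0 1) (EuclideanSpace.single 0 1)
      + u 0 * v 1 * B (EuclideanSpace.single 0 1) (EuclideanSpace.single 1 1)
      + u 1 * v 0 * B (EuclideanSpace.single 1 1) (EuclideanSpace.single 0 1)
      + u 1 * v 1 * B (EuclideanSpace.single 1 1) (EuclideanSpace.single 1 1) := by
  conv_lhs => rw [e2_decomp u, e2_decomp v]
  simp only [map_add, map_smul, ContinuousLinearMap.add_apply,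
    ContinuousLinearMap.smul_apply, smul_eq_mul]
  ring

/-- Chain rule identity: if the spatial Jacobian of `H` at `(t,x)` is
`λ P_x + λ⊥ (I − P_x)` and `H` satisfies `∂_t H = ½ Δ_x H + (D_x H) b`, then for every
`C²` function `G`, the quantity `½ Δ_x (G∘H) + b·∇_x(G∘H) − ∂_t(G∘H)` at `(t,x)` equals
`½ [λ² ⟨x̂, Hess G x̂⟩ + (λ⊥)² ⟨x̂⊥, Hess G x̂⊥⟩]` evaluated at `z = H(t,x)`. -/
theorem chain_rule_radial_tangential
    (x : E2) (hx : x ≠ 0) (t : ℝ) (b : E2) (lam lamPerp : ℝ)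
    (H : ℝ → E2 → E2) (G : E2 → ℝ)
    (hH : ContDiffAt ℝ 2 (fun p : ℝ × E2 => H p.1 p.2) (t, x))
    (hG : ContDiff ℝ 2 G)
    (hJac : fderiv ℝ (H t) x
      = lam • projLine x + lamPerp • (ContinuousLinearMap.id ℝ E2 - projLine x))
    (hPDE : deriv (fun s : ℝ => H s x) t
      = (1 / 2 : ℝ) • lap (H t) x + fderiv ℝ (H t) x b) :
    (1 / 2 : ℝ) * lap (fun y : E2 => G (H t y)) x
        + fderiv ℝ (fun y : E2 => G (H t y)) x b
        - deriv (fun s : ℝ => G (H s x)) t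
      = (1 / 2 : ℝ) * (lam ^ 2 * hessQuad G (H t x) (xhat x)
          + lamPerp ^ 2 * hessQuad G (H t x) (xhatPerp x)) := by
  have hHt : ContDiffAt ℝ 2 (H t) x :=
    hH.comp x (ContDiffAt.prodMk contDiffAt_const contDiffAt_id)
  have hHs : ContDiffAt ℝ 2 (fun s => H s x) t :=
    hH.comp t (ContDiffAt.prodMk contDiffAt_id contDiffAt_const)
  have hGd : Differentiable ℝ G := hG.differentiable two_ne_zero
  have hDG : ContDiff ℝ 1 (fderiv ℝ G) := hG.fderiv_right (by norm_num)
  have hAx : DifferentiableAt ℝ (H t) x := hHt.differentiableAt two_ne_zero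
  have hDH : ContDiffAt ℝ 1 (fun y => fderiv ℝ (H t) y) x := hHt.fderiv_right (by norm_num)
  have hev : ∀ᶠ y in 𝓝 x, ContDiffAt ℝ 2 (H t) y := hHt.eventually (by simp)
  -- second derivatives of H t
  have hDfd : HasFDerivAt (fun y => fderiv ℝ (H t) y)
      (fderiv ℝ (fun y => fderiv ℝ (H t) y) x) x :=
    (hDH.differentiableAt one_ne_zero).hasFDerivAt
  have key : ∀ v : E2,
      HasFDerivAt (fun y => fderiv ℝ (H t) y v)
        ((fderiv ℝ (fun y => fderiv ℝ (H t) y) x).flip v) x := by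
    intro v
    have h := hDfd.clm_apply (hasFDerivAt_const v x)
    simpa using h
  have hlapH : lap (H t) x
      = fderiv ℝ (fun y => fderiv ℝ (H t) y) x (EuclideanSpace.single 0 1)
          (EuclideanSpace.single 0 1)
        + fderiv ℝ (fun y => fderiv ℝ (H t) y) x (EuclideanSpace.single 1 1)
          (EuclideanSpace.single 1 1) := by
    unfold lap
    rw [Fin.sum_univ_two, (key _).fderiv, (key _).fderiv]
    simp
  -- hessian of G
  have hhess : ∀ v : E2, hessQuad G (H t x) v
      = fderiv ℝ (fderiv ℝ G) (H t x) v v := by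
    intro v
    have hd : HasFDerivAt (fderiv ℝ G) (fderiv ℝ (fderiv ℝ G) (H t x)) (H t x) :=
      (hDG.differentiable one_ne_zero (H t x)).hasFDerivAt
    have h := hd.clm_apply (hasFDerivAt_const v (H t x))
    unfold hessQuad
    rw [h.fderiv]
    simp
  -- chain rule, eventually
  have hchain : ∀ᶠ y in 𝓝 x, fderiv ℝ (fun y' : E2 => G (H t y')) y
      = (fderiv ℝ G (H t y)).comp (fderiv ℝ (H t) y) := by
    filter_upwards [hev] with y hy
    exact fderiv_comp y hGd.differentiableAt (hy.differentiableAt two_ne_zero)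
  -- second derivative of G ∘ H t
  have hsecond : ∀ v : E2,
      fderiv ℝ (fun y : E2 => fderiv ℝ (fun y' : E2 => G (H t y')) y v) x v
        = fderiv ℝ G (H t x) (fderiv ℝ (fun y => fderiv ℝ (H t) y) x v v)
          + fderiv ℝ (fderiv ℝ G) (H t x) (fderiv ℝ (H t) x v) (fderiv ℝ (H t) x v) := by
    intro v
    have hF1 : HasFDerivAt (fun y => fderiv ℝ G (H t y))
        ((fderiv ℝ (fderiv ℝ G) (H t x)).comp (fderiv ℝ (H t) x)) x :=
      HasFDerivAt.comp x ((hDG.differentiable one_ne_zero (H t x)).hasFDerivAt) hAx.hasFDerivAt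
    have hF := hF1.clm_apply (key v)
    have heq : (fun y : E2 => fderiv ℝ (fun y' : E2 => G (H t y')) y v)
        =ᶠ[𝓝 x] fun y => (fderiv ℝ G (H t y)) (fderiv ℝ (H t) y v) := by
      filter_upwards [hchain] with y hy
      rw [hy]; rfl
    rw [heq.fderiv_eq, hF.fderiv]
    simp
  -- first order terms
  have hderiv : deriv (fun s : ℝ => G (H s x)) t
      = fderiv ℝ G (H t x) (deriv (fun s : ℝ => H s x) t) := by
    have h1 : HasDerivAt (fun s : ℝ => H s x) (deriv (fun s : ℝ => H s x) t) t :=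
      (hHs.differentiableAt two_ne_zero).hasDerivAt
    exact ((hGd.differentiableAt.hasFDerivAt).comp_hasDerivAt t h1).deriv
  have hfb : fderiv ℝ (fun y : E2 => G (H t y)) x b
      = fderiv ℝ G (H t x) (fderiv ℝ (H t) x b) := by
    have h := fderiv_comp x hGd.differentiableAt hAx
    rw [Function.comp_def] at h
    rw [h]; rfl
  have hlapGH : lap (fun y : E2 => G (H t y)) x
      = (fderiv ℝ G (H t x)
            (fderiv ℝ (fun y => fderiv ℝ (H t) y) x (EuclideanSpace.single 0 1)
              (EuclideanSpace.single 0 1))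
          + fderiv ℝ (fderiv ℝ G) (H t x) (fderiv ℝ (H t) x (EuclideanSpace.single 0 1))
              (fderiv ℝ (H t) x (EuclideanSpace.single 0 1)))
        + (fderiv ℝ G (H t x)
            (fderiv ℝ (fun y => fderiv ℝ (H t) y) x (EuclideanSpace.single 1 1)
              (EuclideanSpace.single 1 1))
          + fderiv ℝ (fderiv ℝ G) (H t x) (fderiv ℝ (H t) x (EuclideanSpace.single 1 1))
              (fderiv ℝ (H t) x (EuclideanSpace.single 1 1))) := by
    unfold lap
    rw [Fin.sum_univ_two, hsecond _, hsecond _]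
  -- coordinates
  have hn : ‖x‖ ≠ 0 := norm_ne_zero_iff.mpr hx
  have hn2 : ‖x‖ ^ 2 = x 0 ^ 2 + x 1 ^ 2 := by
    rw [EuclideanSpace.norm_eq, Real.sq_sqrt (by positivity), Fin.sum_univ_two]
    simp [Real.norm_eq_abs, sq_abs]
  have hcs : (x 0 / ‖x‖) ^ 2 + (x 1 / ‖x‖) ^ 2 = 1 := by
    field_simp
    linarith [hn2]
  have hAe : ∀ i j : Fin 2, (fderiv ℝ (H t) x (EuclideanSpace.single i 1)) j
      = lam * (x i / ‖x‖ * (x j / ‖x‖))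
        + lamPerp * ((if j = i then (1:ℝ) else 0) - x i / ‖x‖ * (x j / ‖x‖)) := by
    intro i j
    rw [hJac]
    have hip : (inner ℝ x (EuclideanSpace.single i (1:ℝ)) : ℝ) = x i := by
      simp [EuclideanSpace.inner_single_right]
    simp only [projLine, ContinuousLinearMap.add_apply, ContinuousLinearMap.smul_apply,
      ContinuousLinearMap.sub_apply, ContinuousLinearMap.id_apply,
      ContinuousLinearMap.smulRight_apply, innerSL_apply_apply,
      PiLp.smul_apply, PiLp.sub_apply, PiLp.add_apply, smul_eq_mul,
      EuclideanSpace.single_apply, hip]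
    field_simp
  have hxh : ∀ j : Fin 2, xhat x j = x j / ‖x‖ := by
    intro j
    simp only [xhat, PiLp.smul_apply, smul_eq_mul]
    rw [inv_mul_eq_div]
  have hxp0 : xhatPerp x 0 = -(x 1 / ‖x‖) := by
    simp [xhatPerp, PiLp.add_apply, EuclideanSpace.single_apply, hxh]
  have hxp1 : xhatPerp x 1 = x 0 / ‖x‖ := by
    simp [xhatPerp, PiLp.add_apply, EuclideanSpace.single_apply, hxh]
  have halg :
      fderiv ℝ (fderiv ℝ G) (H t x) (fderiv ℝ (H t) x (EuclideanSpace.single 0 1))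
          (fderiv ℝ (H t) x (EuclideanSpace.single 0 1))
        + fderiv ℝ (fderiv ℝ G) (H t x) (fderiv ℝ (H t) x (EuclideanSpace.single 1 1))
          (fderiv ℝ (H t) x (EuclideanSpace.single 1 1))
      = lam ^ 2 * fderiv ℝ (fderiv ℝ G) (H t x) (xhat x) (xhat x)
        + lamPerp ^ 2 * fderiv ℝ (fderiv ℝ G) (H t x) (xhatPerp x) (xhatPerp x) := by
    rw [bilin_expand _ (fderiv ℝ (H t) x (EuclideanSpace.single 0 1)) _,
        bilin_expand _ (fderiv ℝ (H t) x (EuclideanSpace.single 1 1)) _,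
        bilin_expand _ (xhat x) (xhat x), bilin_expand _ (xhatPerp x) (xhatPerp x)]
    rw [hAe 0 0, hAe 0 1, hAe 1 0, hAe 1 1, hxh 0, hxh 1, hxp0, hxp1]
    norm_num
    set c := x 0 / ‖x‖ with hc
    set s := x 1 / ‖x‖ with hs
    set B00 := fderiv ℝ (fderiv ℝ G) (H t x) (EuclideanSpace.single 0 1)
      (EuclideanSpace.single 0 1) with hB00
    set B01 := fderiv ℝ (fderiv ℝ G) (H t x) (EuclideanSpace.single 0 1)
      (EuclideanSpace.single 1 1) with hB01
    set B10 := fderiv ℝ (fderiv ℝ G) (H t x) (EuclideanSpace.single 1 1)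
      (EuclideanSpace.single 0 1) with hB10
    set B11 := fderiv ℝ (fderiv ℝ G) (H t x) (EuclideanSpace.single 1 1)
      (EuclideanSpace.single 1 1) with hB11
    linear_combination (((lam - lamPerp) ^ 2 * c ^ 2 - lamPerp ^ 2) * B00
      + (lam - lamPerp) ^ 2 * c * s * (B01 + B10)
      + ((lam - lamPerp) ^ 2 * s ^ 2 - lamPerp ^ 2) * B11) * hcs
  rw [hlapGH, hfb, hderiv, hPDE, hlapH, hhess (xhat x), hhess (xhatPerp x)]
  simp only [map_add, map_smul, smul_eq_mul]
  linear_combination (1 / 2 : ℝ) * halg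
end
end

section
/- For all t > 0, ϑ > 0 and x ∈ ℝ² ∖ {0}: ∫_{ℝ²} g_t(x−y) K₀(√(2ϑ)‖y‖) dy = e^{ϑ t} · K₀(√(2ϑ)‖x‖, ϑ t). -/
open MeasureTheory Real

noncomputable section

/-- The modified Bessel function of the second kind of order 0,
`K₀(z) = (1/2) ∫₀^∞ a⁻¹ exp(−a − z²/(4a)) da`. -/
def besselK0 (z : ℝ) : ℝ :=
  (1 / 2 : ℝ) * ∫ a in Set.Ioi (0 : ℝ), a⁻¹ * Real.exp (-a - z ^ 2 / (4 * a))

/-- The incomplete modified Bessel function of order 0,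
`K₀(z,y) = (1/2) ∫_y^∞ a⁻¹ exp(−a − z²/(4a)) da`. -/
def besselK0Inc (z y : ℝ) : ℝ :=
  (1 / 2 : ℝ) * ∫ a in Set.Ioi y, a⁻¹ * Real.exp (-a - z ^ 2 / (4 * a))

namespace GaussBesselAux

open Set

lemma bnd0 {c : ℝ} (hc : 0 < c) {a : ℝ} (ha : 0 < a) :
    a⁻¹ * Real.exp (-(c / a)) ≤ c⁻¹ := by
  have hca : 0 < c / a := div_pos hc ha
  have hle : c / a ≤ Real.exp (c / a) := (Real.add_one_le_exp _).trans' (by linarith)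
  rw [Real.exp_neg]
  calc a⁻¹ * (Real.exp (c/a))⁻¹ ≤ a⁻¹ * (c/a)⁻¹ := by gcongr
    _ = c⁻¹ := by field_simp

lemma subst_lemma (ϑ : ℝ) (hϑ : 0 < ϑ) (c y₀ : ℝ) :
    ∫ s in Ioi y₀, s⁻¹ * Real.exp (-(ϑ*s) - c / s)
      = ∫ a in Ioi (ϑ*y₀), a⁻¹ * Real.exp (-a - ϑ*c / a) := by
  have key := integral_comp_mul_left_Ioi (fun a : ℝ => a⁻¹ * Real.exp (-a - ϑ*c / a)) y₀ hϑ
  rw [show (fun s : ℝ => (fun a : ℝ => a⁻¹ * Real.exp (-a - ϑ*c / a)) (ϑ*s))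
      = (fun s : ℝ => ϑ⁻¹ • (s⁻¹ * Real.exp (-(ϑ*s) - c / s))) from ?_] at key
  · rw [integral_smul, smul_eq_mul, smul_eq_mul] at key
    have hϑ' : (ϑ:ℝ)⁻¹ ≠ 0 := by positivity
    exact mul_left_cancel₀ hϑ' key
  · funext s
    rcases eq_or_ne s 0 with rfl | hs
    · simp
    · show (ϑ*s)⁻¹ * Real.exp (-(ϑ*s) - ϑ*c / (ϑ*s)) = _
      rw [mul_div_mul_left _ _ hϑ.ne', mul_inv, smul_eq_mul, mul_assoc]

lemma shift_Ioi (f : ℝ → ℝ) (t : ℝ) :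
    ∫ s in Ioi (0:ℝ), f (s + t) = ∫ u in Ioi t, f u := by
  have h1 : ∫ s in Ioi (0:ℝ), f (s + t)
      = ∫ s, (Ioi t).indicator f (s + t) := by
    rw [← integral_indicator measurableSet_Ioi]
    congr 1; funext s
    by_cases hs : s ∈ Ioi (0:ℝ)
    · rw [indicator_of_mem hs, indicator_of_mem (by simpa using hs)]
    · rw [indicator_of_notMem hs, indicator_of_notMem (by simpa using hs)]
  rw [h1, integral_add_right_eq_self, integral_indicator measurableSet_Ioi]

lemma gauss_meas : Measurable fun p : E2 × ℝ => gauss p.2 p.1 := by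
  unfold gauss
  apply Measurable.mul
  · exact ((measurable_const.mul measurable_snd).inv)
  · exact Real.measurable_exp.comp
      (((measurable_fst.norm.pow measurable_const).neg).div
        (measurable_const.mul measurable_snd))

lemma gauss_nonneg {t : ℝ} (ht : 0 ≤ t) (x : E2) : 0 ≤ gauss t x := by
  unfold gauss
  have : (0:ℝ) ≤ (2 * π * t)⁻¹ := by positivity
  positivity

lemma integrable_rexp_gauss {b : ℝ} (hb : 0 < b) :
    Integrable (fun v : E2 => Real.exp (-b * ‖v‖^2)) := by
  have h := (GaussianFourier.integrable_cexp_neg_mul_sq_norm_add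
      (b := (b:ℂ)) (by simpa using hb) 0 (0 : E2)).norm
  convert h using 2 with v
  simp [Complex.norm_exp]
  exact Or.inl (by norm_cast)

lemma gauss_conv (t s : ℝ) (ht : 0 < t) (hs : 0 < s) (x : E2) :
    (∫ y : E2, gauss t (x - y) * gauss s y) = gauss (t+s) x ∧
    Integrable (fun y : E2 => gauss t (x - y) * gauss s y) := by
  set α : ℝ := (t+s)/(2*t*s) with hα
  have hαpos : 0 < α := by positivity
  set c : ℝ := s/(t+s) with hc
  have hpt : (fun y : E2 => gauss t (x - y) * gauss s y)
      = fun y : E2 => (gauss (t+s) x * (α/π)) * Real.exp (-α * ‖y - c • x‖^2) := by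
    funext y
    simp only [gauss]
    have hnorm1 : ‖x - y‖^2 = ‖x‖^2 - 2 * inner ℝ x y + ‖y‖^2 := norm_sub_sq_real x y
    have hnorm2 : ‖y - c • x‖^2 = ‖y‖^2 - 2 * (c * inner ℝ x y) + c^2 * ‖x‖^2 := by
      rw [norm_sub_sq_real, real_inner_smul_right, norm_smul, mul_pow]
      rw [real_inner_comm]
      simp [Real.norm_eq_abs, sq_abs]
    have hexp : -‖x - y‖ ^ 2 / (2 * t) + -‖y‖ ^ 2 / (2 * s)
        = -‖x‖ ^ 2 / (2 * (t+s)) + (-α * ‖y - c • x‖^2) := by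
      rw [hnorm1, hnorm2, hα, hc]
      field_simp
      ring
    have hconst : (2 * π * t)⁻¹ * (2 * π * s)⁻¹ = (2 * π * (t+s))⁻¹ * (α/π) := by
      rw [hα]
      have hπ : (π:ℝ) ≠ 0 := pi_ne_zero
      field_simp
    calc (2 * π * t)⁻¹ * Real.exp (-‖x - y‖ ^ 2 / (2 * t))
          * ((2 * π * s)⁻¹ * Real.exp (-‖y‖ ^ 2 / (2 * s)))
        = (2 * π * t)⁻¹ * (2 * π * s)⁻¹
            * Real.exp (-‖x - y‖ ^ 2 / (2 * t) + -‖y‖ ^ 2 / (2 * s)) := by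
          rw [Real.exp_add]; ring
      _ = (2 * π * (t+s))⁻¹ * (α/π)
            * Real.exp (-‖x‖ ^ 2 / (2 * (t+s)) + (-α * ‖y - c • x‖^2)) := by
          rw [hconst, hexp]
      _ = _ := by rw [Real.exp_add]; ring
  constructor
  · rw [hpt]
    rw [integral_const_mul]
    have htr : (∫ y : E2, Real.exp (-α * ‖y - c • x‖^2))
        = ∫ y : E2, Real.exp (-α * ‖y‖^2) :=
      integral_sub_right_eq_self (fun y : E2 => Real.exp (-α * ‖y‖^2)) (c • x)
    rw [htr, GaussianFourier.integral_rexp_neg_mul_sq_norm hαpos]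
    have hrank : (Module.finrank ℝ E2 : ℝ) / 2 = 1 := by
      simp [finrank_euclideanSpace]
    rw [hrank, Real.rpow_one]
    field_simp
  · rw [hpt]
    exact ((integrable_rexp_gauss hαpos).comp_sub_right (c • x)).const_mul _

lemma bessel_arg (ϑ r : ℝ) (hϑ : 0 < ϑ) :
    (fun a : ℝ => a⁻¹ * Real.exp (-a - (Real.sqrt (2*ϑ) * r) ^ 2 / (4 * a)))
      = fun a : ℝ => a⁻¹ * Real.exp (-a - ϑ*(r^2/2) / a) := by
  funext a
  congr 2
  rw [mul_pow, Real.sq_sqrt (by positivity)]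
  rcases eq_or_ne a 0 with rfl | ha
  · simp
  · field_simp; ring

lemma besselRep {ϑ : ℝ} (hϑ : 0 < ϑ) (y : E2) :
    besselK0 (Real.sqrt (2*ϑ) * ‖y‖)
      = ∫ s in Ioi (0:ℝ), π * (Real.exp (-(ϑ*s)) * gauss s y) := by
  have hsub := subst_lemma ϑ hϑ (‖y‖^2/2) 0
  rw [mul_zero] at hsub
  rw [besselK0, bessel_arg ϑ ‖y‖ hϑ, ← hsub, ← integral_const_mul]
  apply setIntegral_congr_fun measurableSet_Ioi
  intro s hs
  have hs0 : (0:ℝ) < s := hs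
  simp only [gauss]
  have hπ : (π:ℝ) ≠ 0 := pi_ne_zero
  rw [show -(ϑ*s) - ‖y‖^2/2/s = -(ϑ*s) + -‖y‖^2/(2*s) from by field_simp; ring, Real.exp_add]
  field_simp

lemma gauss_le_aux {r s : ℝ} (hr : 0 < r) (hs : 0 < s) :
    (2 * π * s)⁻¹ * Real.exp (-r^2 / (2*s)) ≤ (2*π)⁻¹ * (r^2/2)⁻¹ := by
  have h0 := bnd0 (c := r^2/2) (by positivity) hs
  have he : -r^2/(2*s) = -((r^2/2)/s) := by field_simp
  rw [he, mul_inv, mul_assoc]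
  gcongr

lemma besselRep_int {ϑ : ℝ} (hϑ : 0 < ϑ) (y : E2) (hy : y ≠ 0) :
    IntegrableOn (fun s : ℝ => π * (Real.exp (-(ϑ*s)) * gauss s y)) (Ioi (0:ℝ)) := by
  have hr : (0:ℝ) < ‖y‖ := norm_pos_iff.mpr hy
  apply Integrable.mono' ((exp_neg_integrableOn_Ioi 0 hϑ).const_mul (π * ((2*π)⁻¹ * (‖y‖^2/2)⁻¹)))
  · apply Measurable.aestronglyMeasurable
    exact measurable_const.mul ((Real.measurable_exp.comp (measurable_id.const_mul ϑ).neg).mul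
      (gauss_meas.comp (measurable_const.prodMk measurable_id)))
  · filter_upwards [ae_restrict_mem measurableSet_Ioi] with s hs
    have hs0 : (0:ℝ) < s := hs
    have hg := gauss_nonneg hs0.le y
    rw [Real.norm_eq_abs, abs_of_nonneg (mul_nonneg pi_pos.le
      (mul_nonneg (Real.exp_pos _).le hg))]
    have := gauss_le_aux (r := ‖y‖) hr hs0
    calc π * (Real.exp (-(ϑ*s)) * gauss s y)
        ≤ π * (Real.exp (-(ϑ*s)) * ((2*π)⁻¹ * (‖y‖^2/2)⁻¹)) := by
          unfold gauss; gcongr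
      _ ≤ π * ((2*π)⁻¹ * (‖y‖^2/2)⁻¹) * Real.exp (-ϑ*s) := le_of_eq (by ring_nf)

lemma outer_int {ϑ t : ℝ} (hϑ : 0 < ϑ) (ht : 0 < t) (x : E2) :
    IntegrableOn (fun s : ℝ => π * (Real.exp (-(ϑ*s)) * gauss (t+s) x)) (Ioi (0:ℝ)) := by
  apply Integrable.mono' ((exp_neg_integrableOn_Ioi 0 hϑ).const_mul (π * (2*π*t)⁻¹))
  · apply Measurable.aestronglyMeasurable
    exact measurable_const.mul ((Real.measurable_exp.comp (measurable_id.const_mul ϑ).neg).mul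
      (gauss_meas.comp ((measurable_const.prodMk (measurable_id.const_add t)))))
  · filter_upwards [ae_restrict_mem measurableSet_Ioi] with s hs
    have hs0 : (0:ℝ) < s := hs
    have hts : (0:ℝ) < t + s := by linarith
    have hg := gauss_nonneg hts.le x
    rw [Real.norm_eq_abs, abs_of_nonneg (mul_nonneg pi_pos.le
      (mul_nonneg (Real.exp_pos _).le hg))]
    have hgb : gauss (t+s) x ≤ (2*π*t)⁻¹ := by
      unfold gauss
      calc (2 * π * (t+s))⁻¹ * Real.exp (-‖x‖ ^ 2 / (2 * (t+s)))
          ≤ (2 * π * (t+s))⁻¹ * 1 := by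
            gcongr
            exact Real.exp_le_one_iff.mpr
              (div_nonpos_of_nonpos_of_nonneg (neg_nonpos.mpr (sq_nonneg _)) (by positivity))
        _ ≤ (2*π*t)⁻¹ := by
            rw [mul_one]
            exact inv_anti₀ (by positivity) (by nlinarith [pi_pos])
    calc π * (Real.exp (-(ϑ*s)) * gauss (t+s) x)
        ≤ π * (Real.exp (-(ϑ*s)) * (2*π*t)⁻¹) := by gcongr
      _ ≤ π * (2*π*t)⁻¹ * Real.exp (-ϑ*s) := le_of_eq (by ring_nf)

lemma rhs_calc {t ϑ : ℝ} (ht : 0 < t) (hϑ : 0 < ϑ) (x : E2) :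
    ∫ s in Ioi (0:ℝ), π * (Real.exp (-(ϑ*s)) * gauss (t+s) x)
      = Real.exp (ϑ*t) * besselK0Inc (Real.sqrt (2*ϑ) * ‖x‖) (ϑ*t) := by
  have h1 : ∫ s in Ioi (0:ℝ), π * (Real.exp (-(ϑ*s)) * gauss (t+s) x)
      = ∫ s in Ioi (0:ℝ), (fun u : ℝ =>
          (Real.exp (ϑ*t) * (1/2)) * (u⁻¹ * Real.exp (-(ϑ*u) - (‖x‖^2/2)/u))) (s + t) := by
    apply setIntegral_congr_fun measurableSet_Ioi
    intro s hs
    have hs0 : (0:ℝ) < s := hs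
    have hts : (0:ℝ) < t + s := by linarith
    have hπ : (π:ℝ) ≠ 0 := pi_ne_zero
    simp only [gauss]
    rw [show -(ϑ*(s+t)) - (‖x‖^2/2)/(s+t) = -ϑ*t + (-(ϑ*s) + -‖x‖^2/(2*(t+s)))
      from by field_simp; ring]
    rw [Real.exp_add, Real.exp_add]
    have key : Real.exp (ϑ*t) * Real.exp (-ϑ*t) = 1 := by
      rw [← Real.exp_add]; simp
    have hcst : π * (2*π*(t+s))⁻¹ = (1:ℝ)/2 * (s+t)⁻¹ := by
      field_simp; ring
    calc π * (Real.exp (-(ϑ*s)) * ((2*π*(t+s))⁻¹ * Real.exp (-‖x‖^2/(2*(t+s)))))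
        = (π * (2*π*(t+s))⁻¹) * (Real.exp (-(ϑ*s)) * Real.exp (-‖x‖^2/(2*(t+s)))) := by ring
      _ = ((1:ℝ)/2 * (s+t)⁻¹) * (Real.exp (-(ϑ*s)) * Real.exp (-‖x‖^2/(2*(t+s)))) := by
          rw [hcst]
      _ = (Real.exp (ϑ*t) * Real.exp (-ϑ*t)) *
            ((1:ℝ)/2 * (s+t)⁻¹ * (Real.exp (-(ϑ*s)) * Real.exp (-‖x‖^2/(2*(t+s))))) := by
          rw [key]; ring
      _ = _ := by ring
  rw [h1, shift_Ioi
    (fun u : ℝ => (Real.exp (ϑ*t) * (1/2)) * (u⁻¹ * Real.exp (-(ϑ*u) - (‖x‖^2/2)/u))) t,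
    integral_const_mul, subst_lemma ϑ hϑ (‖x‖^2/2) t, besselK0Inc,
    bessel_arg ϑ ‖x‖ hϑ]
  ring

end GaussBesselAux

open GaussBesselAux Set

/-- For `t, ϑ > 0` and `x ≠ 0`,
`∫ g_t(x−y) K₀(√(2ϑ)‖y‖) dy = e^{ϑt} K₀(√(2ϑ)‖x‖, ϑt)`. -/
theorem gauss_conv_besselK0 (t ϑ : ℝ) (ht : 0 < t) (hϑ : 0 < ϑ)
    (x : E2) (hx : x ≠ 0) :
    (∫ y : E2, gauss t (x - y) * besselK0 (Real.sqrt (2 * ϑ) * ‖y‖))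
      = Real.exp (ϑ * t) * besselK0Inc (Real.sqrt (2 * ϑ) * ‖x‖) (ϑ * t) := by
  have hHmeas : Measurable fun p : E2 × ℝ =>
      gauss t (x - p.1) * (π * (Real.exp (-(ϑ*p.2)) * gauss p.2 p.1)) := by
    apply Measurable.mul
    · exact gauss_meas.comp ((measurable_const.sub measurable_fst).prodMk measurable_const)
    · exact measurable_const.mul ((Real.measurable_exp.comp
        (measurable_snd.const_mul ϑ).neg).mul gauss_meas)
  have hHnonneg : ∀ (y : E2) {s : ℝ}, 0 < s →
      0 ≤ gauss t (x - y) * (π * (Real.exp (-(ϑ*s)) * gauss s y)) := by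
    intro y s hs
    exact mul_nonneg (gauss_nonneg ht.le _)
      (mul_nonneg pi_pos.le (mul_nonneg (Real.exp_pos _).le (gauss_nonneg hs.le _)))
  have h0 : ∀ᵐ y : E2, y ≠ 0 := by
    refine ae_iff.mpr ?_
    simpa using measure_singleton (0 : E2)
  -- Step A
  have stepA : (∫ y : E2, gauss t (x - y) * besselK0 (Real.sqrt (2 * ϑ) * ‖y‖))
      = ∫ y : E2, ∫ s in Ioi (0:ℝ), gauss t (x - y) * (π * (Real.exp (-(ϑ*s)) * gauss s y)) := by
    apply integral_congr_ae
    filter_upwards with y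
    rw [besselRep hϑ y, ← integral_const_mul]
  -- Step B
  have hG_meas : AEStronglyMeasurable (fun y : E2 =>
      ∫ s in Ioi (0:ℝ), gauss t (x - y) * (π * (Real.exp (-(ϑ*s)) * gauss s y))) volume :=
    (hHmeas.stronglyMeasurable.integral_prod_right').aestronglyMeasurable
  have hG_nonneg : ∀ y : E2,
      0 ≤ ∫ s in Ioi (0:ℝ), gauss t (x - y) * (π * (Real.exp (-(ϑ*s)) * gauss s y)) := by
    intro y
    exact setIntegral_nonneg measurableSet_Ioi fun s hs => hHnonneg y hs
  have stepB : (∫ y : E2, ∫ s in Ioi (0:ℝ),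
        gauss t (x - y) * (π * (Real.exp (-(ϑ*s)) * gauss s y)))
      = (∫⁻ y : E2, ENNReal.ofReal (∫ s in Ioi (0:ℝ),
          gauss t (x - y) * (π * (Real.exp (-(ϑ*s)) * gauss s y)))).toReal := by
    rw [integral_eq_lintegral_of_nonneg_ae (Filter.Eventually.of_forall hG_nonneg) hG_meas]
  -- Step C
  have stepC : (∫⁻ y : E2, ENNReal.ofReal (∫ s in Ioi (0:ℝ),
          gauss t (x - y) * (π * (Real.exp (-(ϑ*s)) * gauss s y))))
      = ∫⁻ y : E2, ∫⁻ s in Ioi (0:ℝ),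
          ENNReal.ofReal (gauss t (x - y) * (π * (Real.exp (-(ϑ*s)) * gauss s y))) := by
    apply lintegral_congr_ae
    filter_upwards [h0] with y hy
    apply ofReal_integral_eq_lintegral_ofReal
    · exact (besselRep_int hϑ y hy).const_mul _
    · filter_upwards [ae_restrict_mem measurableSet_Ioi] with s hs
      exact hHnonneg y hs
  -- Step D : Tonelli
  have stepD : (∫⁻ y : E2, ∫⁻ s in Ioi (0:ℝ),
          ENNReal.ofReal (gauss t (x - y) * (π * (Real.exp (-(ϑ*s)) * gauss s y))))
      = ∫⁻ s in Ioi (0:ℝ), ∫⁻ y : E2,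
          ENNReal.ofReal (gauss t (x - y) * (π * (Real.exp (-(ϑ*s)) * gauss s y))) :=
    lintegral_lintegral_swap ((ENNReal.measurable_ofReal.comp hHmeas).aemeasurable)
  -- Step E : inner convolution
  have stepE : (∫⁻ s in Ioi (0:ℝ), ∫⁻ y : E2,
          ENNReal.ofReal (gauss t (x - y) * (π * (Real.exp (-(ϑ*s)) * gauss s y))))
      = ∫⁻ s in Ioi (0:ℝ), ENNReal.ofReal (π * (Real.exp (-(ϑ*s)) * gauss (t+s) x)) := by
    apply lintegral_congr_ae
    filter_upwards [ae_restrict_mem measurableSet_Ioi] with s hs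
    have hs0 : (0:ℝ) < s := hs
    have hconv := gauss_conv t s ht hs0 x
    have hfun : (fun y : E2 => gauss t (x - y) * (π * (Real.exp (-(ϑ*s)) * gauss s y)))
        = fun y : E2 => (π * Real.exp (-(ϑ*s))) * (gauss t (x - y) * gauss s y) := by
      funext y; ring
    calc (∫⁻ y : E2, ENNReal.ofReal (gauss t (x - y) * (π * (Real.exp (-(ϑ*s)) * gauss s y))))
        = ∫⁻ y : E2, ENNReal.ofReal ((π * Real.exp (-(ϑ*s))) * (gauss t (x - y) * gauss s y)) := by
          apply lintegral_congr
          intro y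
          congr 1
          ring
      _ = ENNReal.ofReal (∫ y : E2, (π * Real.exp (-(ϑ*s))) * (gauss t (x - y) * gauss s y)) := by
          rw [← ofReal_integral_eq_lintegral_ofReal (hconv.2.const_mul _)
            (Filter.Eventually.of_forall fun y => mul_nonneg (by positivity)
              (mul_nonneg (gauss_nonneg ht.le _) (gauss_nonneg hs0.le _)))]
      _ = ENNReal.ofReal (π * (Real.exp (-(ϑ*s)) * gauss (t+s) x)) := by
          rw [integral_const_mul, hconv.1]
          congr 1
          ring
  -- Step F
  have stepF : (∫⁻ s in Ioi (0:ℝ), ENNReal.ofReal (π * (Real.exp (-(ϑ*s)) * gauss (t+s) x)))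
      = ENNReal.ofReal (∫ s in Ioi (0:ℝ), π * (Real.exp (-(ϑ*s)) * gauss (t+s) x)) := by
    rw [ofReal_integral_eq_lintegral_ofReal (outer_int hϑ ht x)]
    filter_upwards [ae_restrict_mem measurableSet_Ioi] with s hs
    have hs0 : (0:ℝ) < s := hs
    have hts : (0:ℝ) < t + s := by linarith
    exact mul_nonneg pi_pos.le (mul_nonneg (Real.exp_pos _).le (gauss_nonneg hts.le _))
  have hfinal_nonneg : 0 ≤ ∫ s in Ioi (0:ℝ), π * (Real.exp (-(ϑ*s)) * gauss (t+s) x) := by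
    apply setIntegral_nonneg measurableSet_Ioi
    intro s hs
    have hs0 : (0:ℝ) < s := hs
    have hts : (0:ℝ) < t + s := by linarith
    exact mul_nonneg pi_pos.le (mul_nonneg (Real.exp_pos _).le (gauss_nonneg hts.le _))
  rw [stepA, stepB, stepC, stepD, stepE, stepF, ENNReal.toReal_ofReal hfinal_nonneg]
  exact rhs_calc ht hϑ x

end
end
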